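/- arXiv:1302.0723 — 2 statements merged into one kernel-verified Lean document; each statement's English description precedes it below -/
import Mathlib

section
/- (Single-pair conditional entropy reduction bound for distant locations.) Let p and q be single locations whose column indices differ by at least m+1, and let A be any vector of locations with p, q and the entries of A pairwise distinct. Then H(Z_p | Z_A) − H(Z_p | Z_A, Z_q) ≤ log(1 + ξ²/(η(1+η))). -/
open Finset
set_option linter.unusedSectionVars false

/-- Covariance matrix of the GP: kernel plus sensor noise on the diagonal. -/
noncomputable def SigmaMat {D : Type*} [DecidableEq D] (K : D → D → ℝ) (σn2 : ℝ) :
    Matrix D D ℝ :=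
  Matrix.of fun x y => K x y + if x = y then σn2 else 0

/-- Submatrix of covariances between the entries of two finsets of locations. -/
noncomputable def subMat {D : Type*} (Cov : Matrix D D ℝ) (a s : Finset D) :
    Matrix ↥a ↥s ℝ :=
  Matrix.of fun p q => Cov p.1 q.1

/-- Posterior covariance `Σ_{aa|s} = Σ_{aa} - Σ_{as} Σ_{ss}⁻¹ Σ_{sa}`. -/
noncomputable def postCov {D : Type*} [DecidableEq D] (Cov : Matrix D D ℝ) (a s : Finset D) :
    Matrix ↥a ↥a ℝ :=
  subMat Cov a a - subMat Cov a s * (subMat Cov s s)⁻¹ * subMat Cov s a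

/-- Gaussian conditional entropy `H(Z_a | Z_s) = (1/2) log((2πe)^{|a|} det Σ_{aa|s})`. -/
noncomputable def condEnt {D : Type*} [DecidableEq D] (Cov : Matrix D D ℝ) (a s : Finset D) : ℝ :=
  (1/2) * Real.log ((2 * Real.pi * Real.exp 1) ^ a.card * (postCov Cov a s).det)

/-- Gaussian joint entropy `H(Z_a)`. -/
noncomputable def ent {D : Type*} [DecidableEq D] (Cov : Matrix D D ℝ) (a : Finset D) : ℝ :=
  condEnt Cov a ∅

/-- Mutual information `I(Z_a ; Z_b) = H(Z_a) - H(Z_a | Z_b)`. -/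
noncomputable def mutInf {D : Type*} [DecidableEq D] (Cov : Matrix D D ℝ) (a b : Finset D) : ℝ :=
  ent Cov a - condEnt Cov a b

/-- Conditional mutual information `I(Z_a ; Z_b | Z_s) = H(Z_a | Z_s) - H(Z_a | Z_s, Z_b)`. -/
noncomputable def condMutInf {D : Type*} [DecidableEq D] (Cov : Matrix D D ℝ)
    (a b s : Finset D) : ℝ :=
  condEnt Cov a s - condEnt Cov a (s ∪ b)

/-- Posterior variance `Σ_{yy|A}` of a single location `y`. -/
noncomputable def postVar {D : Type*} [DecidableEq D] (Cov : Matrix D D ℝ) (y : D)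
    (A : Finset D) : ℝ :=
  postCov Cov {y} A ⟨y, Finset.mem_singleton_self y⟩ ⟨y, Finset.mem_singleton_self y⟩

/-- Concatenation `x_{i:j}` of the column selections from column `i` to column `j`. -/
def seg {D : Type*} [DecidableEq D] (x : ℕ → Finset D) (i j : ℕ) : Finset D :=
  (Finset.Icc i j).biUnion x

/-- The set of the `r` locations of column `i`. -/
def column {D : Type*} [Fintype D] (col : D → ℕ) (i : ℕ) : Finset D :=
  Finset.univ.filter (fun p => col p = i)

/-- The complementary vector `u_i` of unobserved locations of column `i` for a path `x`. -/
def ucomp {D : Type*} [Fintype D] [DecidableEq D] (col : D → ℕ) (x : ℕ → Finset D) :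
    ℕ → Finset D :=
  fun i => column col i \ x i

/-- A path selects, in every column `i = 1,…,n`, a vector of `k` distinct locations of
column `i`. -/
def IsPath {D : Type*} [Fintype D] (col : D → ℕ) (n k : ℕ) (x : ℕ → Finset D) : Prop :=
  ∀ i, 1 ≤ i → i ≤ n → x i ⊆ column col i ∧ (x i).card = k


section Helpers
open Matrix

variable {D : Type*} [Fintype D] [DecidableEq D]

theorem mysum (s : Finset D) (g : ↥s → ℝ) :
    ∑ e : D, (if h : e ∈ s then g ⟨e,h⟩ else 0) = ∑ e : ↥s, g e := by
  have h1 : ∀ e : ↥s, g e = (fun d => if h : d ∈ s then g ⟨d,h⟩ else 0) e.1 := by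
    intro e; simp [e.2]
  rw [Finset.sum_congr rfl (fun e _ => h1 e),
    Finset.sum_coe_sort s (fun d => if h : d ∈ s then g ⟨d,h⟩ else 0)]
  exact (Finset.sum_subset s.subset_univ (fun x _ hx => by simp [hx])).symm

/-- extension of a vector on a finset by zero -/
def extv (s : Finset D) (x : ↥s → ℝ) : D → ℝ := fun d => if h : d ∈ s then x ⟨d,h⟩ else 0

variable (Cov : Matrix D D ℝ)

theorem mulVec_extv (s : Finset D) (y : ↥s → ℝ) (d : D) :
    (Cov.mulVec (extv s y)) d = ∑ e : ↥s, Cov d e * y e := by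
  rw [Matrix.mulVec, dotProduct]
  rw [← mysum s (fun e => Cov d e * y e)]
  exact Finset.sum_congr rfl (fun e _ => by by_cases h : e ∈ s <;> simp [extv, h])

theorem L1 (s : Finset D) (x y : ↥s → ℝ) :
    extv s x ⬝ᵥ Cov.mulVec (extv s y) = x ⬝ᵥ (subMat Cov s s).mulVec y := by
  rw [dotProduct]
  have : ∀ d : D, extv s x d * Cov.mulVec (extv s y) d
      = (if h : d ∈ s then x ⟨d,h⟩ * (∑ e : ↥s, Cov d e * y e) else 0) := by
    intro d; by_cases h : d ∈ s <;> simp [extv, h, mulVec_extv]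
  rw [Finset.sum_congr rfl (fun d _ => this d),
    mysum s (fun d => x d * ∑ e : ↥s, Cov (d:D) e * y e)]
  rw [dotProduct]
  refine Finset.sum_congr rfl (fun d _ => ?_)
  rw [Matrix.mulVec, dotProduct]
  simp [subMat]

variable {K : D → D → ℝ} {σs2 σn2 : ℝ}

theorem sigma_symm (hKsymm : ∀ p q : D, K p q = K q p) (x y : D) :
    SigmaMat K σn2 x y = SigmaMat K σn2 y x := by
  simp [SigmaMat, hKsymm x y, eq_comm]

theorem sigma_quad (hKpsd : (Matrix.of K).PosSemidef) (x : D → ℝ) :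
    σn2 * (x ⬝ᵥ x) ≤ x ⬝ᵥ (SigmaMat K σn2).mulVec x := by
  have hd : (SigmaMat K σn2) = Matrix.of K + σn2 • (1 : Matrix D D ℝ) := by
    ext i j
    simp [SigmaMat, Matrix.one_apply, mul_ite]
  rw [hd, Matrix.add_mulVec, dotProduct_add, Matrix.smul_mulVec,
    Matrix.one_mulVec, dotProduct_smul]
  have := hKpsd.dotProduct_mulVec_nonneg x
  simp only [star_trivial] at this
  have h2 : σn2 • (x ⬝ᵥ x) = σn2 * (x ⬝ᵥ x) := rfl
  linarith [this]

theorem dot_self_ge (x : D → ℝ) (p : D) : x p * x p ≤ x ⬝ᵥ x := by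
  rw [dotProduct]
  exact Finset.single_le_sum (f := fun d => x d * x d)
    (fun d _ => mul_self_nonneg _) (Finset.mem_univ p)

theorem subMat_posdef (hKpsd : (Matrix.of K).PosSemidef) (hKsymm : ∀ p q : D, K p q = K q p)
    (hn : 0 < σn2) (s : Finset D) : (subMat (SigmaMat K σn2) s s).PosDef := by
  refine Matrix.PosDef.of_dotProduct_mulVec_pos ?_ ?_
  · ext i j
    simp [subMat, Matrix.conjTranspose_apply, sigma_symm hKsymm]
  · intro x hx
    simp only [star_trivial]
    rw [← L1]
    have h1 := sigma_quad hKpsd (σn2 := σn2) (extv s x)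
    have h2 : 0 < extv s x ⬝ᵥ extv s x := by
      obtain ⟨d, hd⟩ := Function.ne_iff.mp hx
      have hne : extv s x d.1 ≠ 0 := by
        simpa [extv, d.2] using hd
      rw [dotProduct]
      refine Finset.sum_pos' (fun e _ => mul_self_nonneg _) ⟨d.1, Finset.mem_univ _, ?_⟩
      exact mul_self_pos.mpr hne
    nlinarith [h1, h2, hn]

theorem extv_dot (s : Finset D) (w : ↥s → ℝ) (v : D → ℝ) :
    extv s w ⬝ᵥ v = ∑ d : ↥s, w d * v d.1 := by
  rw [dotProduct, ← mysum s (fun d => w d * v d.1)]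
  exact Finset.sum_congr rfl (fun d _ => by by_cases h : d ∈ s <;> simp [extv, h])

theorem postVar_eq (hKsymm : ∀ p q : D, K p q = K q p) (p : D) (s : Finset D) :
    postVar (SigmaMat K σn2) p s = SigmaMat K σn2 p p -
      (fun e : ↥s => SigmaMat K σn2 p e.1) ⬝ᵥ
        (subMat (SigmaMat K σn2) s s)⁻¹.mulVec (fun e : ↥s => SigmaMat K σn2 p e.1) := by
  set Cov := SigmaMat K σn2 with hCov
  set N := (subMat Cov s s)⁻¹ with hN
  rw [postVar, postCov, Matrix.sub_apply]
  congr 1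
  simp only [Matrix.mul_apply, Matrix.of_apply, Matrix.mulVec, dotProduct,
    Finset.sum_mul, Finset.mul_sum]
  rw [Finset.sum_comm]
  refine Finset.sum_congr rfl fun j _ => Finset.sum_congr rfl fun i _ => ?_
  rw [hN, subMat, subMat, subMat]
  simp only [Matrix.of_apply]
  rw [show Cov i.1 p = Cov p i.1 from sigma_symm hKsymm _ _]
  ring

theorem postVar_ge (hKpsd : (Matrix.of K).PosSemidef) (hKsymm : ∀ p q : D, K p q = K q p)
    (hn : 0 < σn2) (p : D) (s : Finset D) (hp : p ∉ s) :
    σn2 ≤ postVar (SigmaMat K σn2) p s := by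
  set Cov := SigmaMat K σn2 with hCov
  set M := subMat Cov s s with hM
  set r : ↥s → ℝ := fun e => Cov p e.1 with hr
  set w : ↥s → ℝ := M⁻¹.mulVec r with hw
  have hdet : IsUnit M.det :=
    isUnit_iff_ne_zero.mpr (subMat_posdef hKpsd hKsymm hn s).det_pos.ne'
  have hMw : M.mulVec w = r := by
    rw [hw, Matrix.mulVec_mulVec, Matrix.mul_nonsing_inv _ hdet, Matrix.one_mulVec]
  set z : D → ℝ := Pi.single p 1 - extv s w with hz
  have hzp : z p = 1 := by simp [hz, extv, hp]
  have haCa : Pi.single p 1 ⬝ᵥ Cov.mulVec (Pi.single p 1) = Cov p p := by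
    rw [single_dotProduct, Matrix.mulVec_single]
    simp
  have haCb : Pi.single p 1 ⬝ᵥ Cov.mulVec (extv s w) = r ⬝ᵥ w := by
    rw [single_dotProduct, mulVec_extv]
    simp [dotProduct, hr]
  have hbCa : extv s w ⬝ᵥ Cov.mulVec (Pi.single p 1) = r ⬝ᵥ w := by
    rw [Matrix.mulVec_single_one, extv_dot]
    rw [dotProduct]
    refine Finset.sum_congr rfl fun d _ => ?_
    rw [Matrix.col_apply, show Cov d.1 p = Cov p d.1 from sigma_symm hKsymm _ _, hr]
    ring
  have hbCb : extv s w ⬝ᵥ Cov.mulVec (extv s w) = r ⬝ᵥ w := by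
    rw [L1, ← hM, hMw, dotProduct_comm]
  have hq : z ⬝ᵥ Cov.mulVec z = Cov p p - r ⬝ᵥ w := by
    rw [hz, Matrix.mulVec_sub, sub_dotProduct, dotProduct_sub,
      dotProduct_sub, haCa, haCb, hbCa, hbCb]
    ring
  have hpost : postVar Cov p s = Cov p p - r ⬝ᵥ w := postVar_eq hKsymm p s
  have h1 := sigma_quad hKpsd (σn2 := σn2) z
  have h2 := dot_self_ge z p
  rw [hzp] at h2
  rw [hpost, ← hq]
  nlinarith [h1, h2, hn]

theorem postVar_empty (p : D) :
    postVar (SigmaMat K σn2) p (∅ : Finset D) = SigmaMat K σn2 p p := by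
  haveI : IsEmpty ↥(∅ : Finset D) := ⟨fun x => (Finset.notMem_empty x.1 x.2)⟩
  rw [postVar, postCov, Matrix.sub_apply, Matrix.mul_apply]
  simp [subMat]

theorem postVar_single (hKsymm : ∀ p q : D, K p q = K q p) (p q : D) :
    postVar (SigmaMat K σn2) p ({q} : Finset D) =
      SigmaMat K σn2 p p - SigmaMat K σn2 p q * (SigmaMat K σn2 q q)⁻¹ * SigmaMat K σn2 p q := by
  haveI : Unique ↥({q} : Finset D) :=
    ⟨⟨⟨q, Finset.mem_singleton_self q⟩⟩, fun x => Subtype.ext (Finset.mem_singleton.mp x.2)⟩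
  have hd : (default : ↥({q} : Finset D)) = ⟨q, Finset.mem_singleton_self q⟩ :=
    Subtype.ext (Finset.mem_singleton.mp (default : ↥({q} : Finset D)).2)
  rw [postVar_eq hKsymm]
  congr 1
  have hinv : (subMat (SigmaMat K σn2) {q} {q})⁻¹ =
      (SigmaMat K σn2 q q)⁻¹ • (1 : Matrix ↥({q} : Finset D) ↥({q} : Finset D) ℝ) := by
    rw [Matrix.inv_def, Matrix.adjugate_subsingleton, Matrix.det_unique, Ring.inverse_eq_inv',
      hd]
    rfl
  rw [hinv, dotProduct, Fintype.sum_unique, Matrix.mulVec, dotProduct,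
    Fintype.sum_unique]
  simp only [Matrix.smul_apply, Matrix.one_apply_eq, smul_eq_mul, mul_one, hd]
  ring

theorem condEnt_singleton (p : D) (s : Finset D) :
    condEnt (SigmaMat K σn2) {p} s =
      (1/2) * Real.log ((2 * Real.pi * Real.exp 1) * postVar (SigmaMat K σn2) p s) := by
  haveI : Unique ↥({p} : Finset D) :=
    ⟨⟨⟨p, Finset.mem_singleton_self p⟩⟩, fun x => Subtype.ext (Finset.mem_singleton.mp x.2)⟩
  have hd : (default : ↥({p} : Finset D)) = ⟨p, Finset.mem_singleton_self p⟩ :=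
    Subtype.ext (Finset.mem_singleton.mp (default : ↥({p} : Finset D)).2)
  rw [condEnt, Matrix.det_unique, Finset.card_singleton, pow_one, hd]
  rfl

end Helpers

/-- **Single-pair conditional entropy reduction bound for distant locations.** -/
theorem single_pair_entropy_bound
    {D : Type*} [Fintype D] [DecidableEq D]
    (r n k m : ℕ) (col : D → ℕ)
    (K : D → D → ℝ) (σs2 σn2 l1 ξ : ℝ)
    (hr : 1 ≤ r) (hk1 : 1 ≤ k) (hkr : k ≤ r) (hm : 1 ≤ m)
    (hs : 0 < σs2) (hn : 0 < σn2) (hl1 : 0 < l1)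
    (hξ : ξ = Real.exp (-((m : ℝ) + 1) ^ 2 / (2 * l1 ^ 2)))
    (hKsymm : ∀ p q : D, K p q = K q p)
    (hKpsd : (Matrix.of K).PosSemidef)
    (hKdiag : ∀ p : D, K p p = σs2)
    (hcol : ∀ p : D, 1 ≤ col p ∧ col p ≤ n)
    (hcolcard : ∀ i : ℕ, 1 ≤ i → i ≤ n → (column col i).card = r)
    (hdecay : ∀ p q : D, (m : ℤ) + 1 ≤ |(col p : ℤ) - (col q : ℤ)| → |K p q| ≤ σs2 * ξ)
    (hsub : ∀ (p q : D) (A : Finset D), p ∉ A → q ∉ A → p ≠ q →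
      postVar (SigmaMat K σn2) p A - postVar (SigmaMat K σn2) p (insert q A)
        ≤ postVar (SigmaMat K σn2) p ∅ - postVar (SigmaMat K σn2) p {q})
    (p q : D) (A : Finset D)
    (hfar : (m : ℤ) + 1 ≤ |(col p : ℤ) - (col q : ℤ)|)
    (hpA : p ∉ A) (hqA : q ∉ A) (hpq : p ≠ q) :
    condEnt (SigmaMat K σn2) {p} A - condEnt (SigmaMat K σn2) {p} (insert q A)
      ≤ Real.log (1 + ξ ^ 2 / ((σn2 / σs2) * (1 + σn2 / σs2))) := by
  have hξpos : 0 < ξ := hξ ▸ Real.exp_pos _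
  have hCpp : SigmaMat K σn2 p p = σs2 + σn2 := by simp [SigmaMat, hKdiag]
  have hCqq : SigmaMat K σn2 q q = σs2 + σn2 := by simp [SigmaMat, hKdiag]
  have hCpq : SigmaMat K σn2 p q = K p q := by simp [SigmaMat, hpq]
  have hspn : (0:ℝ) < σs2 + σn2 := by linarith
  have hKb : K p q ^ 2 ≤ σs2 ^ 2 * ξ ^ 2 := by
    have h := hdecay p q hfar
    nlinarith [abs_nonneg (K p q), sq_abs (K p q)]
  set v1 := postVar (SigmaMat K σn2) p A with hv1d
  set v2 := postVar (SigmaMat K σn2) p (insert q A) with hv2d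
  have hp2 : p ∉ insert q A := by simp [hpq, hpA]
  have hv1 : σn2 ≤ v1 := postVar_ge hKpsd hKsymm hn p A hpA
  have hv2 : σn2 ≤ v2 := postVar_ge hKpsd hKsymm hn p (insert q A) hp2
  have hdiff : v1 - v2 ≤ postVar (SigmaMat K σn2) p ∅ - postVar (SigmaMat K σn2) p {q} := hsub p q A hpA hqA hpq
  have hcomp : postVar (SigmaMat K σn2) p (∅ : Finset D) - postVar (SigmaMat K σn2) p ({q} : Finset D)
      = K p q ^ 2 * (σs2 + σn2)⁻¹ := by
    rw [postVar_empty, postVar_single hKsymm, hCqq, hCpq]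
    ring
  set R := 1 + ξ ^ 2 / ((σn2 / σs2) * (1 + σn2 / σs2)) with hR
  clear_value v1 v2
  clear_value R
  have hden : (0:ℝ) < (σn2 / σs2) * (1 + σn2 / σs2) := by positivity
  have hR1 : 0 ≤ R - 1 := by
    rw [hR]; have : 0 ≤ ξ ^ 2 / ((σn2 / σs2) * (1 + σn2 / σs2)) := by positivity
    linarith
  have e2 : σs2 ^ 2 * ξ ^ 2 * (σs2 + σn2)⁻¹ = (R - 1) * σn2 := by
    rw [hR]
    field_simp
    ring
  have e1 : K p q ^ 2 * (σs2 + σn2)⁻¹ ≤ σs2 ^ 2 * ξ ^ 2 * (σs2 + σn2)⁻¹ :=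
    mul_le_mul_of_nonneg_right hKb (inv_nonneg.mpr hspn.le)
  have e3 : (R - 1) * σn2 ≤ (R - 1) * v2 := mul_le_mul_of_nonneg_left hv2 hR1
  have e4 : (R - 1) * v2 = R * v2 - v2 := by ring
  have hv1v2 : v1 ≤ R * v2 := by linarith
  have h0v2 : 0 < v2 := lt_of_lt_of_le hn hv2
  have h0v1 : 0 < v1 := lt_of_lt_of_le hn hv1
  have hRpos : 0 < R := by linarith
  have hlog : Real.log v1 - Real.log v2 ≤ Real.log R := by
    have := Real.log_le_log h0v1 hv1v2
    rw [Real.log_mul hRpos.ne' h0v2.ne'] at this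
    linarith
  have hlogR : 0 ≤ Real.log R := Real.log_nonneg (by linarith)
  rw [condEnt_singleton, condEnt_singleton]
  have hc : (0:ℝ) < 2 * Real.pi * Real.exp 1 := by positivity
  rw [← hv1d, ← hv2d, Real.log_mul hc.ne' h0v1.ne', Real.log_mul hc.ne' h0v2.ne']
  linarith
end

section
/- (Corollary on unobserved-location entropy reduction, early columns.) Let 2m+2 ≤ i ≤ n and 1 ≤ t ≤ i−2m−1, and for each j = 1, …, i let x_j be a vector of k distinct locations of column j, with u_j the complementary vector of the remaining r−k locations of column j. Then H(Z_{u_t} | Z_{x_{1:i−m−1}}, Z_{u_{t+1:i}}) − H(Z_{u_t} | Z_{x_{1:i−m−1}}, Z_{u_{t+1:i}}, Z_{x_{i−m}}) ≤ k(r−k) · log(1 + ξ²/(η(1+η))). -/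
open Finset

section AuxGP
open Matrix
set_option linter.unusedSectionVars false
variable {D : Type*} [Fintype D] [DecidableEq D]

lemma qf_restrict (Cov : Matrix D D ℝ) (S : Finset D) (g : ↥S → ℝ) :
    (fun x => if h : x ∈ S then g ⟨x, h⟩ else 0) ⬝ᵥ
      Cov.mulVec (fun x => if h : x ∈ S then g ⟨x, h⟩ else 0)
      = g ⬝ᵥ (subMat Cov S S).mulVec g := by
  set f : D → ℝ := fun x => if h : x ∈ S then g ⟨x, h⟩ else 0 with hf
  have hfS : ∀ p : ↥S, f p.1 = g p := by
    intro p; simp [hf, p.2]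
  have h1 : ∀ x : D, Cov.mulVec f x = ∑ p : ↥S, Cov x p.1 * g p := by
    intro x
    unfold Matrix.mulVec dotProduct
    rw [← Finset.sum_subset (Finset.subset_univ S) (by
      intro y _ hy; simp [hf, hy])]
    rw [← Finset.sum_coe_sort S (fun y => Cov x y * f y)]
    exact Finset.sum_congr rfl fun p _ => by rw [hfS]
  unfold dotProduct
  rw [← Finset.sum_subset (Finset.subset_univ S) (by
      intro y _ hy; simp [hf, hy])]
  rw [← Finset.sum_coe_sort S (fun y => f y * Cov.mulVec f y)]
  refine Finset.sum_congr rfl fun p _ => ?_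
  rw [hfS, h1]
  rfl

lemma subMat_posDef (Cov : Matrix D D ℝ) (σn2 : ℝ) (hn : 0 < σn2)
    (hsymm : ∀ x y, Cov x y = Cov y x)
    (hq : ∀ f : D → ℝ, σn2 * ∑ x, f x ^ 2 ≤ f ⬝ᵥ Cov.mulVec f)
    (S : Finset D) : (subMat Cov S S).PosDef := by
  rw [Matrix.posDef_iff_dotProduct_mulVec]
  constructor
  · ext i j
    simp [subMat, Matrix.conjTranspose_apply, hsymm j.1 i.1]
  · intro g hg
    have hst : star g = g := by simp
    rw [hst]
    set f : D → ℝ := fun x => if h : x ∈ S then g ⟨x, h⟩ else 0 with hf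
    have key := qf_restrict Cov S g
    have hb := hq f
    obtain ⟨i, hi⟩ := Function.ne_iff.mp hg
    have hfi : f i.1 = g i := by simp [hf, i.2]
    have hpos : 0 < ∑ x, f x ^ 2 := by
      refine Finset.sum_pos' (fun x _ => sq_nonneg _) ⟨i.1, Finset.mem_univ _, ?_⟩
      rw [hfi]
      exact (sq_nonneg _).lt_of_ne (Ne.symm (pow_ne_zero 2 hi))
    calc (0:ℝ) < σn2 * ∑ x, f x ^ 2 := by positivity
    _ ≤ f ⬝ᵥ Cov.mulVec f := hb
    _ = g ⬝ᵥ (subMat Cov S S).mulVec g := key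


lemma det_union (Cov : Matrix D D ℝ) (hPD : ∀ S : Finset D, (subMat Cov S S).PosDef)
    (a s : Finset D) (hd : Disjoint a s) :
    (subMat Cov (a ∪ s) (a ∪ s)).det
      = (subMat Cov s s).det * (postCov Cov a s).det := by
  haveI : Invertible (subMat Cov s s) :=
    Matrix.invertibleOfIsUnitDet _ (isUnit_iff_ne_zero.mpr (hPD s).det_pos.ne')
  let e : ↥a ⊕ ↥s ≃ ↥(a ∪ s) :=
  { toFun := Sum.elim (fun p => ⟨p.1, Finset.mem_union_left _ p.2⟩)
      (fun p => ⟨p.1, Finset.mem_union_right _ p.2⟩)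
    invFun := fun x => if h : x.1 ∈ a then Sum.inl ⟨x.1, h⟩
      else Sum.inr ⟨x.1, (Finset.mem_union.mp x.2).resolve_left h⟩
    left_inv := by
      rintro (p | p)
      · simp
      · have hpa : p.1 ∉ a := fun h => (Finset.disjoint_left.mp hd h) p.2
        simp [hpa]
    right_inv := fun x => by
      by_cases h : x.1 ∈ a <;> simp [h] }
  have hval : ∀ z : ↥(a ∪ s), Sum.elim (fun p : ↥a => (p : D)) (fun p : ↥s => (p : D))
      (e.symm z) = z.1 := by
    intro z
    by_cases h : z.1 ∈ a <;> simp [e, h]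
  have hblock : ∀ u v : ↥a ⊕ ↥s,
      Matrix.fromBlocks (subMat Cov a a) (subMat Cov a s) (subMat Cov s a) (subMat Cov s s) u v
        = Cov (Sum.elim (fun p : ↥a => (p : D)) (fun p : ↥s => (p : D)) u)
              (Sum.elim (fun p : ↥a => (p : D)) (fun p : ↥s => (p : D)) v) := by
    rintro (u | u) (v | v) <;> rfl
  have hm : subMat Cov (a ∪ s) (a ∪ s)
      = (Matrix.fromBlocks (subMat Cov a a) (subMat Cov a s)
          (subMat Cov s a) (subMat Cov s s)).submatrix e.symm e.symm := by
    ext x y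
    rw [Matrix.submatrix_apply, hblock, hval, hval]
    rfl
  rw [hm, Matrix.det_submatrix_equiv_self e.symm, Matrix.det_fromBlocks₂₂,
      Matrix.invOf_eq_nonsing_inv]
  rfl

lemma det_postCov_pos (Cov : Matrix D D ℝ) (hPD : ∀ S : Finset D, (subMat Cov S S).PosDef)
    (a s : Finset D) (hd : Disjoint a s) : 0 < (postCov Cov a s).det := by
  have h := det_union Cov hPD a s hd
  have h1 := (hPD s).det_pos
  have h2 := (hPD (a ∪ s)).det_pos
  rw [h] at h2
  nlinarith [h1, h2]

lemma postVar_det (Cov : Matrix D D ℝ) (q : D) (S : Finset D) :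
    (postCov Cov {q} S).det = postVar Cov q S := by
  haveI : Unique ↥({q} : Finset D) :=
    ⟨⟨⟨q, Finset.mem_singleton_self q⟩⟩, fun a => Subtype.ext (Finset.mem_singleton.mp a.2)⟩
  rw [Matrix.det_unique]
  have hd : (default : ↥({q} : Finset D)) = ⟨q, Finset.mem_singleton_self q⟩ :=
    Subtype.ext (Finset.mem_singleton.mp (Subtype.prop _))
  rw [hd]
  rfl


/-- explicit formula for the posterior variance -/
lemma postVar_explicit (Cov : Matrix D D ℝ) (q : D) (S : Finset D) :
    postVar Cov q S = Cov q q
      - ∑ p : ↥S, Cov q p.1 * ((subMat Cov S S)⁻¹.mulVec (fun p' : ↥S => Cov p'.1 q)) p := by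
  unfold postVar postCov
  rw [Matrix.sub_apply, Matrix.mul_assoc, Matrix.mul_apply]
  congr 1

lemma postVar_ge_s12 (Cov : Matrix D D ℝ) (σn2 : ℝ) (hn : 0 < σn2)
    (hPD : ∀ S : Finset D, (subMat Cov S S).PosDef)
    (hq : ∀ f : D → ℝ, σn2 * ∑ x, f x ^ 2 ≤ f ⬝ᵥ Cov.mulVec f)
    (q : D) (S : Finset D) (hqS : q ∉ S) : σn2 ≤ postVar Cov q S := by
  haveI : Invertible (subMat Cov S S) :=
    Matrix.invertibleOfIsUnitDet _ (isUnit_iff_ne_zero.mpr (hPD S).det_pos.ne')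
  set c : ↥S → ℝ := (subMat Cov S S)⁻¹.mulVec (fun p' : ↥S => Cov p'.1 q) with hc
  have hMc : (subMat Cov S S).mulVec c = fun p' : ↥S => Cov p'.1 q := by
    rw [hc, Matrix.mulVec_mulVec, Matrix.mul_nonsing_inv _
      (isUnit_iff_ne_zero.mpr (hPD S).det_pos.ne'), Matrix.one_mulVec]
  set f : D → ℝ := fun x => if x = q then 1 else if h : x ∈ S then -(c ⟨x, h⟩) else 0 with hf
  have hfq : f q = 1 := by simp [hf]
  have hfS : ∀ p : ↥S, f p.1 = -(c p) := by
    intro p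
    have hne : p.1 ≠ q := fun h => hqS (h ▸ p.2)
    simp [hf, hne, p.2]
  have hf0 : ∀ y : D, y ≠ q → y ∉ S → f y = 0 := by
    intro y h1 h2; simp [hf, h1, h2]
  -- inner vector
  have hw : ∀ x : D, Cov.mulVec f x = Cov x q - ∑ p : ↥S, Cov x p.1 * c p := by
    intro x
    unfold Matrix.mulVec dotProduct
    rw [← Finset.sum_subset (Finset.subset_univ (insert q S)) (by
      intro y _ hy
      rw [hf0 y (fun h => hy (h ▸ Finset.mem_insert_self q S))
        (fun h => hy (Finset.mem_insert_of_mem h)), mul_zero])]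
    rw [Finset.sum_insert hqS, hfq, mul_one]
    congr 1
    rw [← Finset.sum_coe_sort S (fun y => Cov x y * f y), ← Finset.sum_neg_distrib]
    refine Finset.sum_congr rfl fun p _ => ?_
    rw [hfS p]
    ring
  have hwS : ∀ p' : ↥S, Cov.mulVec f p'.1 = 0 := by
    intro p'
    rw [hw]
    have : ∑ p : ↥S, Cov p'.1 p.1 * c p = (subMat Cov S S).mulVec c p' := rfl
    rw [this, hMc]
    ring
  have hdot : f ⬝ᵥ Cov.mulVec f = postVar Cov q S := by
    unfold dotProduct
    rw [← Finset.sum_subset (Finset.subset_univ (insert q S)) (by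
      intro y _ hy
      rw [hf0 y (fun h => hy (h ▸ Finset.mem_insert_self q S))
        (fun h => hy (Finset.mem_insert_of_mem h)), zero_mul])]
    rw [Finset.sum_insert hqS, hfq, one_mul]
    have hrest : ∑ y ∈ S, f y * Cov.mulVec f y = 0 := by
      rw [← Finset.sum_coe_sort S (fun y => f y * Cov.mulVec f y)]
      refine Finset.sum_eq_zero fun p _ => ?_
      rw [hwS p, mul_zero]
    rw [hrest, add_zero, hw, postVar_explicit]
  have hsum : (1:ℝ) ≤ ∑ x, f x ^ 2 := by
    have : f q ^ 2 ≤ ∑ x, f x ^ 2 :=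
      Finset.single_le_sum (fun x _ => sq_nonneg (f x)) (Finset.mem_univ q)
    rw [hfq] at this
    simpa using this
  calc σn2 = σn2 * 1 := by ring
  _ ≤ σn2 * ∑ x, f x ^ 2 := by nlinarith
  _ ≤ f ⬝ᵥ Cov.mulVec f := hq f
  _ = postVar Cov q S := hdot

lemma postVar_empty_s12 (Cov : Matrix D D ℝ) (q : D) : postVar Cov q ∅ = Cov q q := by
  rw [postVar_explicit]
  simp

lemma postVar_singleton (Cov : Matrix D D ℝ) (q p : D) (hpq : p ≠ q) :
    postVar Cov q {p} = Cov q q - Cov q p * ((Cov p p)⁻¹ * Cov p q) := by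
  haveI : Unique ↥({p} : Finset D) :=
    ⟨⟨⟨p, Finset.mem_singleton_self p⟩⟩, fun a => Subtype.ext (Finset.mem_singleton.mp a.2)⟩
  rw [postVar_explicit, Fintype.sum_unique]
  have hd : (default : ↥({p} : Finset D)) = ⟨p, Finset.mem_singleton_self p⟩ :=
    Subtype.ext (Finset.mem_singleton.mp (Subtype.prop _))
  have hinv : (subMat Cov {p} {p})⁻¹ = (Cov p p)⁻¹ • (1 : Matrix ↥({p}:Finset D) ↥({p}:Finset D) ℝ) := by
    rw [Matrix.inv_def, Matrix.adjugate_subsingleton, Matrix.det_unique, Ring.inverse_eq_inv]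
    congr 1
    rw [hd]
    rfl
  congr 1
  rw [hinv]
  unfold Matrix.mulVec dotProduct
  rw [Fintype.sum_unique, hd]
  simp [Matrix.smul_apply, Matrix.one_apply]

/-- log-det chain rule -/
lemma L_insert (Cov : Matrix D D ℝ) (hPD : ∀ S : Finset D, (subMat Cov S S).PosDef)
    (q : D) (S : Finset D) (hqS : q ∉ S) :
    Real.log (subMat Cov (insert q S) (insert q S)).det
      = Real.log (subMat Cov S S).det + Real.log (postVar Cov q S) := by
  have hd : Disjoint ({q} : Finset D) S := Finset.disjoint_singleton_left.mpr hqS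
  have h := det_union Cov hPD {q} S hd
  rw [← Finset.insert_eq] at h
  rw [h, postVar_det] at *
  rw [Real.log_mul (hPD S).det_pos.ne' (by
    have := det_postCov_pos Cov hPD {q} S hd
    rw [postVar_det] at this
    exact this.ne')]

lemma condEnt_eq_L (Cov : Matrix D D ℝ) (hPD : ∀ S : Finset D, (subMat Cov S S).PosDef)
    (a s : Finset D) (hd : Disjoint a s) :
    condEnt Cov a s = (1/2) * ((a.card : ℝ) * Real.log (2 * Real.pi * Real.exp 1)
      + Real.log (subMat Cov (a ∪ s) (a ∪ s)).det - Real.log (subMat Cov s s).det) := by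
  have h1 : (0:ℝ) < (subMat Cov s s).det := (hPD s).det_pos
  have h2 : (0:ℝ) < (postCov Cov a s).det := det_postCov_pos Cov hPD a s hd
  have hbase : (0:ℝ) < 2 * Real.pi * Real.exp 1 := by positivity
  unfold condEnt
  rw [Real.log_mul (by positivity) h2.ne', Real.log_pow,
    det_union Cov hPD a s hd, Real.log_mul h1.ne' h2.ne'] at *
  ring

/-- peeling the unobserved set: single-target log variance drop -/
lemma logVar_drop (Cov : Matrix D D ℝ) (σn2 Δ : ℝ) (hn : 0 < σn2) (hΔ : 0 ≤ Δ)
    (hvar : ∀ (S : Finset D), ∀ y ∉ S, σn2 ≤ postVar Cov y S) (q : D) (u : Finset D) :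
    ∀ (S : Finset D), q ∉ S → q ∉ u → Disjoint u S →
    (∀ p ∈ u, ∀ T : Finset D, q ∉ T → p ∉ T →
        postVar Cov q T - postVar Cov q (insert p T) ≤ Δ) →
    Real.log (postVar Cov q S) - Real.log (postVar Cov q (S ∪ u))
      ≤ u.card * Real.log (1 + Δ / σn2) := by
  induction u using Finset.induction_on with
  | empty => intro S _ _ _ _; simp
  | @insert p u hp ih =>
    intro S hqS hqu hdisj hpair
    have hqp : q ≠ p := by rintro rfl; exact hqu (Finset.mem_insert_self q u)
    have hqu' : q ∉ u := fun h => hqu (Finset.mem_insert_of_mem h)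
    have hpS : p ∉ S := Finset.disjoint_left.mp hdisj (Finset.mem_insert_self p u)
    have hdisj' : Disjoint u S :=
      Finset.disjoint_of_subset_left (Finset.subset_insert p u) hdisj
    have hqSu : q ∉ S ∪ u := by simp [hqS, hqu']
    have hpSu : p ∉ S ∪ u := by simp [hpS, hp]
    have h1 := ih S hqS hqu' hdisj' (fun p' hp' => hpair p' (Finset.mem_insert_of_mem hp'))
    have hv : σn2 ≤ postVar Cov q (S ∪ u) := hvar _ q hqSu
    have hv' : σn2 ≤ postVar Cov q (insert p (S ∪ u)) := by
      refine hvar _ q ?_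
      simp [hqp, hqSu]
    have hdrop : postVar Cov q (S ∪ u) - postVar Cov q (insert p (S ∪ u)) ≤ Δ :=
      hpair p (Finset.mem_insert_self p u) (S ∪ u) hqSu hpSu
    have hv0 : 0 < postVar Cov q (S ∪ u) := lt_of_lt_of_le hn hv
    have hv'0 : 0 < postVar Cov q (insert p (S ∪ u)) := lt_of_lt_of_le hn hv'
    have hstep : Real.log (postVar Cov q (S ∪ u))
        - Real.log (postVar Cov q (insert p (S ∪ u))) ≤ Real.log (1 + Δ / σn2) := by
      rw [← Real.log_div hv0.ne' hv'0.ne']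
      have hratio : postVar Cov q (S ∪ u) / postVar Cov q (insert p (S ∪ u)) ≤ 1 + Δ / σn2 := by
        rw [div_le_iff₀ hv'0]
        have h2 : Δ ≤ Δ / σn2 * postVar Cov q (insert p (S ∪ u)) := by
          calc Δ = Δ / σn2 * σn2 := by field_simp
          _ ≤ Δ / σn2 * postVar Cov q (insert p (S ∪ u)) :=
            mul_le_mul_of_nonneg_left hv' (by positivity)
        nlinarith
      exact Real.log_le_log (by positivity) hratio
    rw [Finset.union_insert]
    rw [Finset.card_insert_of_notMem hp]
    push_cast
    linarith

/-- main double induction -/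
lemma ind_main (Cov : Matrix D D ℝ) (σn2 Δ : ℝ) (hn : 0 < σn2) (hΔ : 0 ≤ Δ)
    (hPD : ∀ S : Finset D, (subMat Cov S S).PosDef)
    (hvar : ∀ (S : Finset D), ∀ y ∉ S, σn2 ≤ postVar Cov y S)
    (u C : Finset D) (B : Finset D) :
    Disjoint u C → Disjoint u B → Disjoint B C →
    (∀ q ∈ B, ∀ p ∈ u, ∀ T : Finset D, q ∉ T → p ∉ T →
        postVar Cov q T - postVar Cov q (insert p T) ≤ Δ) →
    (Real.log (subMat Cov (u ∪ C) (u ∪ C)).det - Real.log (subMat Cov C C).det)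
      - (Real.log (subMat Cov (u ∪ (C ∪ B)) (u ∪ (C ∪ B))).det
          - Real.log (subMat Cov (C ∪ B) (C ∪ B)).det)
      ≤ u.card * B.card * Real.log (1 + Δ / σn2) := by
  induction B using Finset.induction_on with
  | empty =>
    intro _ _ _ _
    rw [Finset.union_empty]
    simp
  | @insert q B hqB ih =>
    intro hdUC hdUB hdBC hpair
    have hlog : 0 ≤ Real.log (1 + Δ / σn2) :=
      Real.log_nonneg (le_add_of_nonneg_right (by positivity))
    have hqu : q ∉ u := fun h => Finset.disjoint_left.mp hdUB h (Finset.mem_insert_self q B)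
    have hqC : q ∉ C := Finset.disjoint_left.mp hdBC (Finset.mem_insert_self q B)
    have hdUB' : Disjoint u B :=
      Finset.disjoint_of_subset_right (Finset.subset_insert q B) hdUB
    have hdBC' : Disjoint B C :=
      Finset.disjoint_of_subset_left (Finset.subset_insert q B) hdBC
    have hqCB : q ∉ C ∪ B := by
      simp [hqC, hqB]
    have hqUCB : q ∉ u ∪ (C ∪ B) := by
      simp [hqu, hqC, hqB]
    have hIH := ih hdUC hdUB' hdBC' (fun q' hq' => hpair q' (Finset.mem_insert_of_mem hq'))
    have e1 : C ∪ insert q B = insert q (C ∪ B) := by rw [Finset.union_insert]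
    have e2 : u ∪ insert q (C ∪ B) = insert q (u ∪ (C ∪ B)) := by rw [Finset.union_insert]
    have c1 := L_insert Cov hPD q (C ∪ B) hqCB
    have c2 := L_insert Cov hPD q (u ∪ (C ∪ B)) hqUCB
    have hdU_CB : Disjoint u (C ∪ B) := Finset.disjoint_union_right.mpr ⟨hdUC, hdUB'⟩
    have hdrop : Real.log (postVar Cov q (C ∪ B)) - Real.log (postVar Cov q (u ∪ (C ∪ B)))
        ≤ u.card * Real.log (1 + Δ / σn2) := by
      have := logVar_drop Cov σn2 Δ hn hΔ hvar q u (C ∪ B) hqCB hqu hdU_CB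
        (fun p hp T h1 h2 => hpair q (Finset.mem_insert_self q B) p hp T h1 h2)
      rwa [Finset.union_comm (C ∪ B) u] at this
    rw [e1, e2, c1, c2, Finset.card_insert_of_notMem hqB]
    push_cast
    nlinarith [hIH, hdrop, hlog]

end AuxGP

set_option maxHeartbeats 1600000 in
/-- **Corollary on unobserved-location entropy reduction, early columns.** -/
theorem corollary_unobserved_entropy_reduction_early
    {D : Type*} [Fintype D] [DecidableEq D]
    (r n k m : ℕ) (col : D → ℕ)
    (K : D → D → ℝ) (σs2 σn2 l1 ξ : ℝ)
    (hr : 1 ≤ r) (hk1 : 1 ≤ k) (hkr : k ≤ r) (hm : 1 ≤ m)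
    (hs : 0 < σs2) (hn : 0 < σn2) (hl1 : 0 < l1)
    (hξ : ξ = Real.exp (-((m : ℝ) + 1) ^ 2 / (2 * l1 ^ 2)))
    (hKsymm : ∀ p q : D, K p q = K q p)
    (hKpsd : (Matrix.of K).PosSemidef)
    (hKdiag : ∀ p : D, K p p = σs2)
    (hcol : ∀ p : D, 1 ≤ col p ∧ col p ≤ n)
    (hcolcard : ∀ i : ℕ, 1 ≤ i → i ≤ n → (column col i).card = r)
    (hdecay : ∀ p q : D, (m : ℤ) + 1 ≤ |(col p : ℤ) - (col q : ℤ)| → |K p q| ≤ σs2 * ξ)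
    (hsub : ∀ (p q : D) (A : Finset D), p ∉ A → q ∉ A → p ≠ q →
      postVar (SigmaMat K σn2) p A - postVar (SigmaMat K σn2) p (insert q A)
        ≤ postVar (SigmaMat K σn2) p ∅ - postVar (SigmaMat K σn2) p {q})
    (i t : ℕ) (hi1 : 2 * m + 2 ≤ i) (hi2 : i ≤ n) (ht1 : 1 ≤ t) (ht2 : t ≤ i - 2 * m - 1)
    (x : ℕ → Finset D)
    (hx : ∀ j : ℕ, 1 ≤ j → j ≤ i → x j ⊆ column col j ∧ (x j).card = k) :
    condEnt (SigmaMat K σn2) (ucomp col x t)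
        (seg x 1 (i - m - 1) ∪ seg (ucomp col x) (t + 1) i)
        - condEnt (SigmaMat K σn2) (ucomp col x t)
            ((seg x 1 (i - m - 1) ∪ seg (ucomp col x) (t + 1) i) ∪ x (i - m))
      ≤ (k : ℝ) * ((r : ℝ) - (k : ℝ)) * Real.log (1 + ξ ^ 2 / ((σn2 / σs2) * (1 + σn2 / σs2))) := by
  classical
  set Cov := SigmaMat K σn2 with hCov
  have hsymm : ∀ p q : D, Cov p q = Cov q p := by
    intro p q
    simp only [hCov, SigmaMat, Matrix.of_apply]
    rw [hKsymm p q]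
    congr 1
    simp [eq_comm]
  have hdiagv : ∀ p : D, Cov p p = σs2 + σn2 := by
    intro p; simp [hCov, SigmaMat, hKdiag]
  have hoff : ∀ p q : D, p ≠ q → Cov p q = K p q := by
    intro p q h; simp [hCov, SigmaMat, h]
  have hmv : ∀ (f : D → ℝ) (x : D),
      Cov.mulVec f x = (Matrix.of K).mulVec f x + σn2 * f x := by
    intro f x
    unfold Matrix.mulVec dotProduct
    have : ∀ y : D, Cov x y * f y
        = K x y * f y + (if x = y then σn2 * f y else 0) := by
      intro y
      simp only [hCov, SigmaMat, Matrix.of_apply]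
      by_cases h : x = y <;> simp [h] <;> ring
    rw [Finset.sum_congr rfl (fun y _ => this y), Finset.sum_add_distrib,
      Finset.sum_ite_eq Finset.univ x (fun y => σn2 * f y)]
    simp [Matrix.of_apply]
  have hqf : ∀ f : D → ℝ, σn2 * ∑ x, f x ^ 2 ≤ dotProduct f (Cov.mulVec f) := by
    intro f
    have hK : 0 ≤ dotProduct f ((Matrix.of K).mulVec f) := by
      have := hKpsd.dotProduct_mulVec_nonneg f
      simpa using this
    have expand : dotProduct f (Cov.mulVec f)
        = dotProduct f ((Matrix.of K).mulVec f) + σn2 * ∑ x, f x ^ 2 := by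
      unfold dotProduct
      rw [Finset.mul_sum, ← Finset.sum_add_distrib]
      refine Finset.sum_congr rfl fun x _ => ?_
      rw [hmv f x]
      ring
    rw [expand]
    linarith
  have hPD : ∀ S : Finset D, (subMat Cov S S).PosDef := subMat_posDef Cov σn2 hn hsymm hqf
  have hvar : ∀ (S : Finset D), ∀ y ∉ S, σn2 ≤ postVar Cov y S :=
    fun S y hy => postVar_ge_s12 Cov σn2 hn hPD hqf y S hy
  have hsn : (0:ℝ) < σs2 + σn2 := by linarith
  have hξpos : 0 < ξ := hξ ▸ Real.exp_pos _
  set Δ : ℝ := σs2 ^ 2 * ξ ^ 2 / (σs2 + σn2) with hΔdef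
  have hΔ : 0 ≤ Δ := by positivity
  set u : Finset D := ucomp col x t with hu
  set A : Finset D := seg x 1 (i - m - 1) ∪ seg (ucomp col x) (t + 1) i with hA
  set B : Finset D := x (i - m) with hB
  have him1 : 1 ≤ i - m := by omega
  have him2 : i - m ≤ i := by omega
  have ht_i : t ≤ i := by omega
  have hcolx : ∀ j, 1 ≤ j → j ≤ i → ∀ p ∈ x j, col p = j := by
    intro j h1 h2 p hp
    exact (Finset.mem_filter.mp ((hx j h1 h2).1 hp)).2
  have hcolu : ∀ (j : ℕ) (p : D), p ∈ ucomp col x j → col p = j := by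
    intro j p hp
    exact (Finset.mem_filter.mp (Finset.mem_sdiff.mp hp).1).2
  have hnotx : ∀ (j : ℕ) (p : D), p ∈ ucomp col x j → p ∉ x j := by
    intro j p hp
    exact (Finset.mem_sdiff.mp hp).2
  have hdUA : Disjoint u A := by
    rw [Finset.disjoint_left]
    intro p hpu hpA
    have hcp : col p = t := hcolu t p hpu
    rcases Finset.mem_union.mp hpA with h | h
    · obtain ⟨j, hj, hpj⟩ := Finset.mem_biUnion.mp h
      rw [Finset.mem_Icc] at hj
      have hj2 : col p = j := hcolx j hj.1 (by omega) p hpj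
      have hjt : j = t := by omega
      exact hnotx t p hpu (hjt ▸ hpj)
    · obtain ⟨j, hj, hpj⟩ := Finset.mem_biUnion.mp h
      rw [Finset.mem_Icc] at hj
      have hj2 : col p = j := hcolu j p hpj
      omega
  have hdUB : Disjoint u B := by
    rw [Finset.disjoint_left]
    intro p hpu hpB
    have hcp : col p = t := hcolu t p hpu
    have hcp2 : col p = i - m := hcolx (i - m) him1 him2 p hpB
    omega
  have hdBA : Disjoint B A := by
    rw [Finset.disjoint_left]
    intro q hqB hqA
    have hcq : col q = i - m := hcolx (i - m) him1 him2 q hqB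
    rcases Finset.mem_union.mp hqA with h | h
    · obtain ⟨j, hj, hqj⟩ := Finset.mem_biUnion.mp h
      rw [Finset.mem_Icc] at hj
      have hj2 : col q = j := hcolx j hj.1 (by omega) q hqj
      omega
    · obtain ⟨j, hj, hqj⟩ := Finset.mem_biUnion.mp h
      rw [Finset.mem_Icc] at hj
      have hj2 : col q = j := hcolu j q hqj
      have hjim : j = i - m := by omega
      exact hnotx (i - m) q (hjim ▸ hqj) hqB
  have hpair : ∀ q ∈ B, ∀ p ∈ u, ∀ T : Finset D, q ∉ T → p ∉ T →
      postVar Cov q T - postVar Cov q (insert p T) ≤ Δ := by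
    intro q hq p hp T hqT hpT
    have hcq : col q = i - m := hcolx (i - m) him1 him2 q hq
    have hcp : col p = t := hcolu t p hp
    have hpq : p ≠ q := by
      intro h
      rw [h] at hcp
      omega
    have h1 := hsub q p T hqT hpT (Ne.symm hpq)
    refine le_trans h1 ?_
    rw [postVar_empty_s12 Cov q, postVar_singleton Cov q p hpq]
    rw [hoff q p (Ne.symm hpq), hoff p q hpq, hdiagv p, hKsymm p q]
    have habs : |K q p| ≤ σs2 * ξ := by
      apply hdecay q p
      rw [hcq, hcp]
      have hge : t + m + 1 ≤ i - m := by omega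
      have h0 : (0:ℤ) ≤ ((i - m : ℕ) : ℤ) - (t : ℤ) := by omega
      rw [abs_of_nonneg h0]
      omega
    have h2 : K q p ^ 2 ≤ (σs2 * ξ) ^ 2 := by
      have := abs_le.mp habs
      nlinarith [this.1, this.2]
    have h3 : Cov q q - (Cov q q - K q p * ((σs2 + σn2)⁻¹ * K q p))
        = K q p ^ 2 / (σs2 + σn2) := by
      field_simp
      ring
    rw [h3, hΔdef]
    rw [div_le_div_iff_of_pos_right hsn]
    nlinarith [h2]
  have hcardB : B.card = k := (hx (i - m) him1 him2).2
  have hcardu : u.card = r - k := by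
    have hsubt : x t ⊆ column col t := (hx t ht1 ht_i).1
    rw [hu]
    show (column col t \ x t).card = r - k
    rw [Finset.card_sdiff_of_subset hsubt, (hx t ht1 ht_i).2, hcolcard t ht1 (by omega)]
  have hdU_AB : Disjoint u (A ∪ B) := Finset.disjoint_union_right.mpr ⟨hdUA, hdUB⟩
  have hmain := ind_main Cov σn2 Δ hn hΔ hPD hvar u A B hdUA hdUB hdBA hpair
  rw [hcardB, hcardu] at hmain
  have hklr : ((r - k : ℕ) : ℝ) = (r : ℝ) - (k : ℝ) := by
    push_cast [hkr]
    ring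
  rw [hklr] at hmain
  have hΔeq : (1:ℝ) + ξ ^ 2 / ((σn2 / σs2) * (1 + σn2 / σs2)) = 1 + Δ / σn2 := by
    rw [hΔdef]
    field_simp
  rw [condEnt_eq_L Cov hPD u A hdUA, condEnt_eq_L Cov hPD u (A ∪ B) hdU_AB, hΔeq]
  have hlog0 : 0 ≤ Real.log (1 + Δ / σn2) :=
    Real.log_nonneg (le_add_of_nonneg_right (by positivity))
  have hrk : (k:ℝ) ≤ (r:ℝ) := by exact_mod_cast hkr
  have hPL : 0 ≤ ((r:ℝ) - k) * (k:ℝ) * Real.log (1 + Δ / σn2) :=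
    mul_nonneg (mul_nonneg (by linarith) (by positivity)) hlog0
  nlinarith [hmain, hPL]
end
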